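/- For every prime p ≥ 5, the sum ∑_{n=0}^{p-1} C_n of Catalan numbers is congruent to 1 modulo p if p ≡ 1 (mod 3), and congruent to -2 modulo p if p ≡ 2 (mod 3). -/
import Mathlib

open Finset Nat

private lemma catalan_key (n : ℕ) :
    4 * Nat.centralBinom n = Nat.centralBinom (n + 1) + 2 * catalan n := by
  apply Nat.eq_of_mul_eq_mul_left (Nat.succ_pos n)
  have h1 := Nat.succ_mul_centralBinom_succ n
  have h2 := succ_mul_catalan_eq_centralBinom n
  nlinarith [h1, h2]

private lemma centralBinom_p (p : ℕ) [Fact p.Prime] :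
    (Nat.centralBinom p : ZMod p) = 2 := by
  have h := Choose.choose_modEq_choose_mod_mul_choose_div_nat (p := p) (n := 2 * p) (k := p)
  have hp : 0 < p := (Fact.out : p.Prime).pos
  have h2p : 2 * p % p = 0 := Nat.mul_mod_left 2 p
  have h2d : 2 * p / p = 2 := by
    rw [Nat.mul_div_cancel _ hp]
  rw [h2p, h2d, Nat.mod_self, Nat.div_self hp] at h
  have := (ZMod.natCast_eq_natCast_iff _ _ _).mpr h
  simpa [Nat.centralBinom] using this

private lemma centralBinom_vanish (p n : ℕ) [Fact p.Prime] (h1 : p / 2 < n) (h2 : n < p) :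
    (Nat.centralBinom n : ZMod p) = 0 := by
  have hp : p.Prime := Fact.out
  have hodd : p % 2 = 1 := hp.eq_two_or_odd.resolve_left (by rintro h; omega)
  have hdvd : p ∣ (2 * n).choose n :=
    hp.dvd_choose h2 (by omega) (by omega)
  rw [Nat.centralBinom]
  exact (ZMod.natCast_eq_zero_iff _ _).mpr hdvd

private lemma centralBinom_cast (p : ℕ) [Fact p.Prime] (hodd : p % 2 = 1) :
    ∀ n, n ≤ p / 2 →
      (Nat.centralBinom n : ZMod p) = (-4) ^ n * ((p / 2).choose n : ZMod p) := by
  intro n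
  induction n with
  | zero => intro _; simp [Nat.centralBinom]
  | succ n ih =>
    intro hn
    have hm := ih (by omega)
    have hp : p.Prime := Fact.out
    have hnp : (((n : ℕ) + 1 : ℕ) : ZMod p) ≠ 0 := by
      rw [Ne, ZMod.natCast_eq_zero_iff]
      intro hd
      have := Nat.le_of_dvd (by omega) hd
      omega
    apply mul_left_cancel₀ hnp
    have h1 : ((n + 1 : ℕ) : ZMod p) * (Nat.centralBinom (n + 1) : ZMod p)
        = 2 * ((2 * n + 1 : ℕ) : ZMod p) * (Nat.centralBinom n : ZMod p) := by
      exact_mod_cast congrArg (Nat.cast : ℕ → ZMod p) (Nat.succ_mul_centralBinom_succ n)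
    have hch : ((p / 2).choose (n + 1) : ZMod p) * ((n + 1 : ℕ) : ZMod p)
        = ((p / 2).choose n : ZMod p) * (((p / 2 : ℕ) : ZMod p) - (n : ZMod p)) := by
      have hc := congrArg (Nat.cast : ℕ → ZMod p) (Nat.choose_succ_right_eq (p / 2) n)
      push_cast [Nat.cast_sub (by omega : n ≤ p / 2)] at hc
      exact_mod_cast hc
    have hz : 2 * ((p / 2 : ℕ) : ZMod p) + 1 = 0 := by
      have h : ((2 * (p / 2) + 1 : ℕ) : ZMod p) = 0 := by
        rw [show 2 * (p / 2) + 1 = p by omega]; exact ZMod.natCast_self p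
      push_cast at h
      linear_combination h
    push_cast at h1 hch ⊢
    rw [h1, hm]
    linear_combination (-(-4 : ZMod p) ^ (n + 1)) * hch
      + 2 * (-4 : ZMod p) ^ n * (((p / 2).choose n : ℕ) : ZMod p) * hz

private lemma two_not_square : ¬ IsSquare ((2 : ℕ) : ZMod 3) := by decide

private lemma neg_three_pow (p : ℕ) [Fact p.Prime] (hp5 : 5 ≤ p) :
    (p % 3 = 1 → (-3 : ZMod p) ^ (p / 2) = 1) ∧
    (p % 3 = 2 → (-3 : ZMod p) ^ (p / 2) = -1) := by
  have hp : p.Prime := Fact.out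
  have hp2 : p ≠ 2 := by omega
  have hodd : p % 2 = 1 := hp.eq_two_or_odd.resolve_left hp2
  haveI : Fact (Nat.Prime 3) := ⟨by norm_num⟩
  have key : legendreSym p (-3) = legendreSym 3 (p : ℤ) := by
    have hmul : legendreSym p (-3) = legendreSym p (-1) * legendreSym p 3 := by
      rw [show (-3 : ℤ) = -1 * 3 by norm_num, legendreSym.mul]
    have hn1 : legendreSym p (-1) = (-1) ^ (p / 2) := by
      rw [legendreSym.at_neg_one hp2, ZMod.χ₄_eq_neg_one_pow hodd]
    have hrec := legendreSym.quadratic_reciprocity' (p := 3) (q := p) (by norm_num) hp2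
    push_cast at hrec
    rw [hmul, hn1, hrec]
    norm_num
    rw [← mul_assoc, ← pow_add, ← two_mul, pow_mul]
    norm_num
  have hpow := legendreSym.eq_pow p (-3)
  have hc : (((-3 : ℤ)) : ZMod p) = -3 := by push_cast; ring
  rw [hc] at hpow
  constructor
  · intro h1
    have : legendreSym 3 (p : ℤ) = 1 := by
      rw [legendreSym.mod 3 (p : ℤ)]
      rw [show ((p : ℤ) % ((3:ℕ):ℤ)) = 1 by push_cast; omega, legendreSym.at_one]
    rw [← hpow, key, this]; norm_num
  · intro h2
    have : legendreSym 3 (p : ℤ) = -1 := by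
      rw [legendreSym.mod 3 (p : ℤ)]
      rw [show ((p : ℤ) % ((3:ℕ):ℤ)) = 2 by push_cast; omega]
      rw [show (2 : ℤ) = ((2 : ℕ) : ℤ) by norm_num]
      exact (legendreSym.eq_neg_one_iff' (p := 3) (a := 2)).mpr two_not_square
    rw [← hpow, key, this]; norm_num

theorem sum_catalan_mod_p (p : ℕ) (hp : p.Prime) (hp5 : 5 ≤ p) :
    (p % 3 = 1 → (∑ n ∈ Finset.range p, (catalan n : ZMod p)) = 1) ∧
    (p % 3 = 2 → (∑ n ∈ Finset.range p, (catalan n : ZMod p)) = -2) := by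
  haveI : Fact p.Prime := ⟨hp⟩
  have hodd : p % 2 = 1 := hp.eq_two_or_odd.resolve_left (by omega)
  set T : ZMod p := ∑ n ∈ Finset.range p, (catalan n : ZMod p) with hT
  set S : ZMod p := ∑ n ∈ Finset.range p, (Nat.centralBinom n : ZMod p) with hS
  have htel : 4 * S = (S + 2 - 1) + 2 * T := by
    have hsum : ∑ n ∈ Finset.range p, ((4 * Nat.centralBinom n : ℕ) : ZMod p)
        = ∑ n ∈ Finset.range p, ((Nat.centralBinom (n + 1) + 2 * catalan n : ℕ) : ZMod p) :=
      Finset.sum_congr rfl fun n _ => by rw [catalan_key n]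
    push_cast at hsum
    rw [Finset.sum_add_distrib, ← Finset.mul_sum, ← Finset.mul_sum] at hsum
    have hshift : ∑ n ∈ Finset.range p, (Nat.centralBinom (n + 1) : ZMod p)
        = S + (Nat.centralBinom p : ZMod p) - 1 := by
      have h1 := Finset.sum_range_succ (fun n => (Nat.centralBinom n : ZMod p)) p
      have h2 := Finset.sum_range_succ' (fun n => (Nat.centralBinom n : ZMod p)) p
      simp only [Nat.centralBinom_zero, Nat.cast_one] at h2
      rw [h1, ← hS] at h2
      linear_combination -h2
    rw [hshift, centralBinom_p p] at hsum
    linear_combination hsum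
  have hS3 : S = (-3 : ZMod p) ^ (p / 2) := by
    have hsub : S = ∑ n ∈ Finset.range (p / 2 + 1), (Nat.centralBinom n : ZMod p) := by
      rw [hS]
      refine (Finset.sum_subset (Finset.range_subset_range.mpr (by omega)) ?_).symm
      intro x hx hx'
      simp only [Finset.mem_range] at hx hx'
      exact centralBinom_vanish p x (by omega) hx
    rw [hsub, Finset.sum_congr rfl
      (fun n hn => centralBinom_cast p hodd n (by simpa [Nat.lt_succ_iff] using hn))]
    have := add_pow (-4 : ZMod p) 1 (p / 2)
    simp only [one_pow, mul_one] at this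
    rw [show (-3 : ZMod p) = -4 + 1 by ring, this]
  have h2ne : (2 : ZMod p) ≠ 0 := by
    rw [show (2 : ZMod p) = ((2 : ℕ) : ZMod p) by norm_num, Ne,
      ZMod.natCast_eq_zero_iff]
    intro hd
    have := Nat.le_of_dvd (by norm_num) hd
    omega
  constructor
  · intro h1
    have hε := (neg_three_pow p hp5).1 h1
    have h2T : 2 * T = 2 * 1 := by
      rw [mul_one]
      have : S = 1 := by rw [hS3, hε]
      rw [this] at htel
      linear_combination -htel
    exact mul_left_cancel₀ h2ne h2T
  · intro h2
    have hε := (neg_three_pow p hp5).2 h2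
    have h2T : 2 * T = 2 * (-2) := by
      have : S = -1 := by rw [hS3, hε]
      rw [this] at htel
      linear_combination -htel
    exact mul_left_cancel₀ h2ne h2T
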